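/- The polynomial 4x³ − 3x² + 4x − 1 has a unique real root ω, this root satisfies 0 < ω < 1/2, and the function f : [0, 1/2) → ℝ defined by f(x) = (2−x)^{2−x}(1+x)^{1+x} / (x^x (1−x)^{1−x} (2x)^{2x} (1−2x)^{1−2x}), with the convention 0⁰ = 1, attains its maximum on [0, 1/2) at x = ω; that is, f(x) ≤ f(ω) for all x ∈ [0, 1/2). -/

import Mathlib

open Real Set

noncomputable def f (x : ℝ) : ℝ :=
  ((2 - x) ^ (2 - x) * (1 + x) ^ (1 + x)) /
    (x ^ x * (1 - x) ^ (1 - x) * (2 * x) ^ (2 * x) * (1 - 2 * x) ^ (1 - 2 * x))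

noncomputable def g (x : ℝ) : ℝ :=
  (2 - x) * Real.log (2 - x) + (1 + x) * Real.log (1 + x)
    - x * Real.log x - (1 - x) * Real.log (1 - x)
    - 2 * x * Real.log (2 * x) - (1 - 2 * x) * Real.log (1 - 2 * x)

lemma aux_deriv (a c x : ℝ) (h : c + a * x ≠ 0) :
    HasDerivAt (fun t => (c + a * t) * Real.log (c + a * t))
      (a * Real.log (c + a * x) + a) x := by
  have hu : HasDerivAt (fun t : ℝ => c + a * t) a x := by
    simpa using ((hasDerivAt_id x).const_mul a).const_add c
  have hlog : HasDerivAt (fun t => Real.log (c + a * t)) (a / (c + a * x)) x := by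
    simpa [div_eq_mul_inv, mul_comm, Function.comp_def] using (Real.hasDerivAt_log h).comp x hu
  have hm := hu.mul hlog
  refine hm.congr_deriv ?_
  field_simp

lemma g_deriv (x : ℝ) (hx : x ∈ Ioo (0:ℝ) (1/2)) :
    HasDerivAt g (Real.log (1+x) + Real.log (1-x) + 2 * Real.log (1-2*x)
      - Real.log (2-x) - Real.log x - 2 * Real.log (2*x)) x := by
  obtain ⟨h0, h2⟩ := hx
  have h1 := aux_deriv (-1) 2 x (by intro h; nlinarith)
  have h2' := aux_deriv 1 1 x (by intro h; nlinarith)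
  have h3 := aux_deriv 1 0 x (by intro h; nlinarith)
  have h4 := aux_deriv (-1) 1 x (by intro h; nlinarith)
  have h5 := aux_deriv 2 0 x (by intro h; nlinarith)
  have h6 := aux_deriv (-2) 1 x (by intro h; nlinarith)
  have key := ((((h1.add h2').sub h3).sub h4).sub h5).sub h6
  have e : g = fun t => (2 + (-1) * t) * Real.log (2 + (-1) * t)
      + (1 + 1 * t) * Real.log (1 + 1 * t)
      - (0 + 1 * t) * Real.log (0 + 1 * t)
      - (1 + (-1) * t) * Real.log (1 + (-1) * t)
      - (0 + 2 * t) * Real.log (0 + 2 * t)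
      - (1 + (-2) * t) * Real.log (1 + (-2) * t) := by
    funext t
    simp only [g]
    ring_nf
  rw [e]
  refine key.congr_deriv ?_
  ring_nf

lemma f_eq (x : ℝ) (hx : x ∈ Ioo (0:ℝ) (1/2)) : f x = Real.exp (g x) := by
  obtain ⟨h0, h2⟩ := hx
  have a1 : (0:ℝ) < 2 - x := by linarith
  have a2 : (0:ℝ) < 1 + x := by linarith
  have a3 : (0:ℝ) < 1 - x := by linarith
  have a4 : (0:ℝ) < 2 * x := by linarith
  have a5 : (0:ℝ) < 1 - 2*x := by linarith
  rw [f, Real.rpow_def_of_pos a1, Real.rpow_def_of_pos a2, Real.rpow_def_of_pos h0,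
      Real.rpow_def_of_pos a3, Real.rpow_def_of_pos a4, Real.rpow_def_of_pos a5,
      ← Real.exp_add, ← Real.exp_add, ← Real.exp_add, ← Real.exp_add, ← Real.exp_sub]
  congr 1
  simp only [g]
  ring

lemma p_hasDeriv (x : ℝ) :
    HasDerivAt (fun x : ℝ => 4 * x ^ 3 - 3 * x ^ 2 + 4 * x - 1) (12 * x ^ 2 - 6 * x + 4) x := by
  have h := (((((hasDerivAt_pow 3 x).const_mul 4).sub ((hasDerivAt_pow 2 x).const_mul 3)).add
      ((hasDerivAt_id x).const_mul 4)).sub_const 1)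
  refine h.congr_deriv ?_
  simp
  ring

lemma p_strictMono : StrictMono (fun x : ℝ => 4 * x ^ 3 - 3 * x ^ 2 + 4 * x - 1) := by
  apply strictMono_of_deriv_pos
  intro x
  rw [(p_hasDeriv x).deriv]
  nlinarith [sq_nonneg (4*x - 1)]

theorem f_max_at_root :
    (∃! ω : ℝ, 4 * ω ^ 3 - 3 * ω ^ 2 + 4 * ω - 1 = 0) ∧
    ∀ ω : ℝ, 4 * ω ^ 3 - 3 * ω ^ 2 + 4 * ω - 1 = 0 →
      0 < ω ∧ ω < 1 / 2 ∧ ∀ x ∈ Set.Ico (0 : ℝ) (1 / 2), f x ≤ f ω := by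
  have hex : ∃ ω : ℝ, 4 * ω ^ 3 - 3 * ω ^ 2 + 4 * ω - 1 = 0 := by
    have hc : ContinuousOn (fun x : ℝ => 4 * x ^ 3 - 3 * x ^ 2 + 4 * x - 1) (Icc 0 (1/2)) := by
      fun_prop
    have := intermediate_value_Icc (by norm_num : (0:ℝ) ≤ 1/2) hc
    have h0 : (0:ℝ) ∈ Icc ((fun x : ℝ => 4 * x ^ 3 - 3 * x ^ 2 + 4 * x - 1) 0)
        ((fun x : ℝ => 4 * x ^ 3 - 3 * x ^ 2 + 4 * x - 1) (1/2)) := by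
      norm_num
    obtain ⟨ω, _, hω⟩ := this h0
    exact ⟨ω, hω⟩
  constructor
  · obtain ⟨ω, hω⟩ := hex
    refine ⟨ω, hω, fun y hy => p_strictMono.injective ?_⟩
    simp only [hy, hω]
  · intro ω hω
    have hω0 : 0 < ω := by
      by_contra h
      push_neg at h
      rcases lt_or_eq_of_le h with h | h
      · have := p_strictMono h
        simp only [hω] at this
        norm_num at this
      · subst h
        norm_num at hω
    have hω2 : ω < 1/2 := by
      by_contra h
      push_neg at h
      rcases lt_or_eq_of_le h with h | h
      · have := p_strictMono h
        simp only [hω] at this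
        norm_num at this
      · rw [← h] at hω
        norm_num at hω
    refine ⟨hω0, hω2, ?_⟩
    -- derivative sign rewriting
    have deriv_eq : ∀ x ∈ Ioo (0:ℝ) (1/2), deriv g x =
        Real.log ((1+x) * (1-x) * ((1-2*x) * (1-2*x)))
          - Real.log ((2-x) * x * ((2*x) * (2*x))) := by
      intro x hx
      obtain ⟨h0, h2⟩ := hx
      have hA : (1:ℝ) + x ≠ 0 := by intro h; nlinarith
      have hB : (1:ℝ) - x ≠ 0 := by intro h; nlinarith
      have hC : (1:ℝ) - 2*x ≠ 0 := by intro h; nlinarith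
      have hE : (2:ℝ) - x ≠ 0 := by intro h; nlinarith
      have hF : x ≠ 0 := ne_of_gt h0
      have hG : (2:ℝ) * x ≠ 0 := by intro h; nlinarith
      rw [(g_deriv x ⟨h0, h2⟩).deriv,
          Real.log_mul (mul_ne_zero hA hB) (mul_ne_zero hC hC), Real.log_mul hA hB,
          Real.log_mul hC hC,
          Real.log_mul (mul_ne_zero hE hF) (mul_ne_zero hG hG), Real.log_mul hE hF,
          Real.log_mul hG hG]
      ring
    have hmono : StrictMonoOn g (Ioc 0 ω) := by
      apply strictMonoOn_of_deriv_pos (convex_Ioc 0 ω)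
      · intro x hx
        exact ((g_deriv x ⟨hx.1, lt_of_le_of_lt hx.2 hω2⟩).continuousAt).continuousWithinAt
      · intro x hx
        rw [interior_Ioc] at hx
        obtain ⟨h0, hxo⟩ := hx
        have hx2 : x < 1/2 := hxo.trans hω2
        rw [deriv_eq x ⟨h0, hx2⟩]
        have hp : 4 * x ^ 3 - 3 * x ^ 2 + 4 * x - 1 < 0 := by
          have := p_strictMono hxo
          simpa [hω] using this
        have hD : (0:ℝ) < (2-x) * x * ((2*x) * (2*x)) :=
          mul_pos (mul_pos (by linarith) h0) (mul_pos (by linarith) (by linarith))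
        have hND : (2-x) * x * ((2*x) * (2*x)) < (1+x) * (1-x) * ((1-2*x) * (1-2*x)) := by
          nlinarith
        have := Real.log_lt_log hD hND
        linarith
    have hanti : StrictAntiOn g (Ico ω (1/2)) := by
      apply strictAntiOn_of_deriv_neg (convex_Ico ω (1/2))
      · intro x hx
        exact ((g_deriv x ⟨lt_of_lt_of_le hω0 hx.1, hx.2⟩).continuousAt).continuousWithinAt
      · intro x hx
        rw [interior_Ico] at hx
        obtain ⟨hxo, hx2⟩ := hx
        have h0 : 0 < x := hω0.trans hxo
        rw [deriv_eq x ⟨h0, hx2⟩]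
        have hp : 0 < 4 * x ^ 3 - 3 * x ^ 2 + 4 * x - 1 := by
          have := p_strictMono hxo
          simpa [hω] using this
        have e3 : (0:ℝ) < 1 - 2*x := by linarith
        have hN : (0:ℝ) < (1+x) * (1-x) * ((1-2*x) * (1-2*x)) :=
          mul_pos (mul_pos (by linarith) (by linarith)) (mul_pos e3 e3)
        have hND : (1+x) * (1-x) * ((1-2*x) * (1-2*x)) < (2-x) * x * ((2*x) * (2*x)) := by
          nlinarith
        have := Real.log_lt_log hN hND
        linarith
    have key : ∀ x ∈ Ioo (0:ℝ) (1/2), g x ≤ g ω := by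
      intro x hx
      rcases le_or_gt x ω with h | h
      · rcases eq_or_lt_of_le h with rfl | h'
        · exact le_refl _
        · exact (hmono ⟨hx.1, h⟩ ⟨hω0, le_refl _⟩ h').le
      · exact (hanti ⟨le_refl _, hω2⟩ ⟨h.le, hx.2⟩ h).le
    have hfω : f ω = Real.exp (g ω) := f_eq ω ⟨hω0, hω2⟩
    intro x hx
    rcases eq_or_lt_of_le hx.1 with h | hx0
    · -- x = 0 case
      subst h
      have hf0 : f 0 = 4 := by norm_num [f]
      have n1 : (7/4:ℝ) ≤ (7/4:ℝ) ^ (7/4:ℝ) := by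
        nth_rewrite 1 [← Real.rpow_one (7/4:ℝ)]
        exact Real.rpow_le_rpow_of_exponent_le (by norm_num) (by norm_num)
      have n2 : (5/4:ℝ) ≤ (5/4:ℝ) ^ (5/4:ℝ) := by
        nth_rewrite 1 [← Real.rpow_one (5/4:ℝ)]
        exact Real.rpow_le_rpow_of_exponent_le (by norm_num) (by norm_num)
      have d1 : ((1/4:ℝ)) ^ ((1/4:ℝ)) ≤ 1 :=
        Real.rpow_le_one (by norm_num) (by norm_num) (by norm_num)
      have d2 : ((3/4:ℝ)) ^ ((3/4:ℝ)) ≤ 1 :=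
        Real.rpow_le_one (by norm_num) (by norm_num) (by norm_num)
      have d3 : ((1/2:ℝ)) ^ ((1/2:ℝ)) * ((1/2:ℝ)) ^ ((1/2:ℝ)) = 1/2 := by
        rw [← Real.rpow_add (by norm_num)]
        norm_num
      have p1 : (0:ℝ) < (1/4:ℝ)^(1/4:ℝ) := Real.rpow_pos_of_pos (by norm_num) _
      have p2 : (0:ℝ) < (3/4:ℝ)^(3/4:ℝ) := Real.rpow_pos_of_pos (by norm_num) _
      have p3 : (0:ℝ) < (1/2:ℝ)^(1/2:ℝ) := Real.rpow_pos_of_pos (by norm_num) _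
      have hfq : f (1/4) = ((7/4:ℝ)^(7/4:ℝ) * (5/4:ℝ)^(5/4:ℝ)) /
          ((1/4:ℝ)^(1/4:ℝ) * (3/4:ℝ)^(3/4:ℝ) * (1/2:ℝ)^(1/2:ℝ) * (1/2:ℝ)^(1/2:ℝ)) := by
        norm_num [f]
      have hq : (4:ℝ) ≤ f (1/4) := by
        rw [hfq, le_div_iff₀ (by positivity)]
        have hNlb : (7/4:ℝ) * (5/4:ℝ) ≤ (7/4:ℝ)^(7/4:ℝ) * (5/4:ℝ)^(5/4:ℝ) :=
          mul_le_mul n1 n2 (by norm_num) (by positivity)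
        have hab : (1/4:ℝ)^(1/4:ℝ) * (3/4:ℝ)^(3/4:ℝ) ≤ 1 :=
          mul_le_one₀ d1 p2.le d2
        nlinarith [mul_pos p1 p2, mul_pos p3 p3]
      have hle : f (1/4) ≤ f ω := by
        rw [f_eq (1/4) (by norm_num), hfω]
        exact Real.exp_le_exp.mpr (key (1/4) (by norm_num))
      rw [hf0]
      linarith
    · rw [f_eq x ⟨hx0, hx.2⟩, hfω]
      exact Real.exp_le_exp.mpr (key x ⟨hx0, hx.2⟩)
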